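/- Fix a real number q > 1 and a sign ε ∈ {+1,−1}. The (q,ε)-residue function is injective on charged partitions: if O^{(q,ε)}_{|λ,s⟩}(u) = O^{(q,ε)}_{|λ′,s′⟩}(u) in ℝ(u), then λ = λ′ and s = s′. -/

import Mathlib

/-!
For a real number `q > 1` and a sign `ε ∈ {+1, -1}`, the `(q,ε)`-residue function
`O^{(q,ε)}_{|λ,s⟩}(u) = (∏_{b addable} (u - ε·q^{cont^s b})) / (∏_{b removable} (u - ε·q^{cont^s b}))`
is injective on charged partitions.
-/

open scoped Classical

noncomputable section

/-- A box `c` is addable for the Young diagram `μ`. -/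
def IsAddable (μ : YoungDiagram) (c : ℕ × ℕ) : Prop :=
  c ∉ μ ∧ IsLowerSet (insert c (μ.cells : Set (ℕ × ℕ)))

/-- A box `c` is removable for the Young diagram `μ`. -/
def IsRemovable (μ : YoungDiagram) (c : ℕ × ℕ) : Prop :=
  c ∈ μ ∧ IsLowerSet ((μ.cells : Set (ℕ × ℕ)) \ {c})

/-- The `s`-shifted content of a box `c = (i, j)` is `s + j - i`. -/
def cont (s : ℤ) (c : ℕ × ℕ) : ℤ := s + (c.2 : ℤ) - (c.1 : ℤ)

/-- The `(q, ε)`-residue function of the charged partition `|μ, s⟩`, as an element of `ℝ(u)`. -/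
def residueFun (q ε : ℝ) (μ : YoungDiagram) (s : ℤ) : RatFunc ℝ :=
  (∏ᶠ c ∈ {c | IsAddable μ c}, (RatFunc.X - RatFunc.C (ε * q ^ (cont s c)))) /
    (∏ᶠ c ∈ {c | IsRemovable μ c}, (RatFunc.X - RatFunc.C (ε * q ^ (cont s c))))

namespace Aux
variable (μ : YoungDiagram) (s : ℤ)

def addRow (i : ℕ) : Prop := i = 0 ∨ μ.rowLen i < μ.rowLen (i-1)
def remRow (i : ℕ) : Prop := μ.rowLen (i+1) < μ.rowLen i
def β (i : ℕ) : ℤ := s + (μ.rowLen i : ℤ) - (i : ℤ)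

variable {μ s}

lemma rowLen_zero {i : ℕ} (h : μ.colLen 0 ≤ i) : μ.rowLen i = 0 := by
  by_contra hne
  have : (i, 0) ∈ μ := YoungDiagram.mem_iff_lt_rowLen.2 (Nat.pos_of_ne_zero hne)
  have := YoungDiagram.mem_iff_lt_colLen.1 this
  omega

lemma β_strictAnti : StrictAnti (β μ s) := by
  apply strictAnti_nat_of_succ_lt
  intro i
  have := μ.rowLen_anti i (i+1) (by omega)
  simp only [β]
  push_cast
  omega

lemma isAddable_iff {i j : ℕ} : IsAddable μ (i, j) ↔ j = μ.rowLen i ∧ addRow μ i := by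
  constructor
  · rintro ⟨hnm, hls⟩
    have hle : μ.rowLen i ≤ j := by
      by_contra hlt
      exact hnm (YoungDiagram.mem_iff_lt_rowLen.2 (by omega))
    have hj : j = μ.rowLen i := by
      rcases Nat.eq_zero_or_pos j with hj0 | hj0
      · omega
      · have : ((i, j-1) : ℕ × ℕ) ∈ insert (i,j) (μ.cells : Set (ℕ × ℕ)) :=
          hls (Prod.mk_le_mk.2 ⟨by omega, by omega⟩) (Set.mem_insert _ _)
        rcases this with h | h
        · exfalso; simp only [Prod.mk.injEq] at h; omega
        · have := YoungDiagram.mem_iff_lt_rowLen.1 (by simpa using h)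
          omega
    refine ⟨hj, ?_⟩
    rcases Nat.eq_zero_or_pos i with hi0 | hi0
    · exact Or.inl hi0
    · right
      have : ((i-1, j) : ℕ × ℕ) ∈ insert (i,j) (μ.cells : Set (ℕ × ℕ)) :=
        hls (Prod.mk_le_mk.2 ⟨by omega, by omega⟩) (Set.mem_insert _ _)
      rcases this with h | h
      · exfalso; simp only [Prod.mk.injEq] at h; omega
      · have := YoungDiagram.mem_iff_lt_rowLen.1 (by simpa using h)
        omega
  · rintro ⟨hj, hadd⟩
    constructor
    · intro hm; have := YoungDiagram.mem_iff_lt_rowLen.1 hm; omega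
    · rintro ⟨a, b⟩ ⟨c, d⟩ ⟨hac, hbd⟩ hm
      simp only [Prod.mk.injEq, Set.mem_insert_iff] at hm ⊢
      rcases hm with ⟨rfl, rfl⟩ | hm
      · rcases Nat.lt_or_ge c a with hca | hca
        · right
          have h1 : c ≤ a - 1 := by omega
          have h2 : μ.rowLen (a-1) ≤ μ.rowLen c := μ.rowLen_anti _ _ h1
          have : a = 0 ∨ μ.rowLen a < μ.rowLen (a-1) := hadd
          have hba : d < μ.rowLen c := by omega
          simpa using YoungDiagram.mem_iff_lt_rowLen.2 hba
        · have : c = a := by omega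
          subst this
          rcases Nat.lt_or_ge d b with hdb | hdb
          · right
            have : d < μ.rowLen c := by omega
            simpa using YoungDiagram.mem_iff_lt_rowLen.2 this
          · left; omega
      · right
        exact μ.isLowerSet ⟨hac, hbd⟩ hm

lemma isRemovable_iff {i j : ℕ} :
    IsRemovable μ (i, j) ↔ j + 1 = μ.rowLen i ∧ remRow μ i := by
  constructor
  · rintro ⟨hm, hls⟩
    have hj : j < μ.rowLen i := YoungDiagram.mem_iff_lt_rowLen.1 hm
    have h1 : μ.rowLen i = j + 1 := by
      by_contra hne
      have hmem : ((i, j+1) : ℕ × ℕ) ∈ (μ.cells : Set (ℕ × ℕ)) \ {(i,j)} := by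
        constructor
        · simpa using YoungDiagram.mem_iff_lt_rowLen.2 (show j + 1 < μ.rowLen i by omega)
        · simp
      have := hls (show ((i,j) : ℕ×ℕ) ≤ (i, j+1) by simp [Prod.le_def]) hmem
      simp at this
    have h2 : μ.rowLen (i+1) ≤ j := by
      by_contra hne
      have hmem : ((i+1, j) : ℕ × ℕ) ∈ (μ.cells : Set (ℕ × ℕ)) \ {(i,j)} := by
        constructor
        · simpa using YoungDiagram.mem_iff_lt_rowLen.2 (show j < μ.rowLen (i+1) by omega)
        · simp
      have := hls (show ((i,j) : ℕ×ℕ) ≤ (i+1, j) by simp [Prod.le_def]) hmem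
      simp at this
    exact ⟨by omega, by simp [remRow]; omega⟩
  · rintro ⟨hj, hrem⟩
    have hrem' : μ.rowLen (i+1) < μ.rowLen i := hrem
    constructor
    · exact YoungDiagram.mem_iff_lt_rowLen.2 (by omega)
    · rintro ⟨a, b⟩ ⟨c, d⟩ ⟨hac, hbd⟩ ⟨hm, hne⟩
      simp only [Set.mem_singleton_iff, Prod.mk.injEq, not_and] at hne
      have hmem : b < μ.rowLen a := YoungDiagram.mem_iff_lt_rowLen.1 (by simpa using hm)
      constructor
      · exact μ.isLowerSet ⟨hac, hbd⟩ hm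
      · simp only [Set.mem_singleton_iff, Prod.mk.injEq, not_and]
        rintro rfl rfl
        dsimp only at *
        rcases eq_or_lt_of_le hac with rfl | hlt
        · exact hne rfl (by omega)
        · have h3 : μ.rowLen a ≤ μ.rowLen (c+1) := μ.rowLen_anti _ _ (by omega)
          omega

open Finset Polynomial

variable (μ s)

def addRows : Finset ℕ := (Finset.range (μ.colLen 0 + 1)).filter (addRow μ)
def remRows : Finset ℕ := (Finset.range (μ.colLen 0 + 1)).filter (remRow μ)
def AC : Finset ℤ := (addRows μ).image (β μ s)
def RC : Finset ℤ := (remRows μ).image (fun i => β μ s i - 1)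

variable {μ s}

lemma mem_addRows {i : ℕ} : i ∈ addRows μ ↔ addRow μ i := by
  simp only [addRows, mem_filter, mem_range, and_iff_right_iff_imp]
  rintro (rfl | hlt)
  · omega
  · by_contra hge
    have : μ.rowLen (i-1) = 0 := rowLen_zero (by omega)
    omega

lemma mem_remRows {i : ℕ} : i ∈ remRows μ ↔ remRow μ i := by
  simp only [remRows, mem_filter, mem_range, and_iff_right_iff_imp]
  intro hlt
  by_contra hge
  have : μ.rowLen i = 0 := rowLen_zero (by omega)
  simp only [remRow] at hlt
  omega

lemma addable_set_eq :
    {c | IsAddable μ c} = ↑((addRows μ).image (fun i => (i, μ.rowLen i))) := by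
  ext ⟨i, j⟩
  simp only [Set.mem_setOf_eq, coe_image, Set.mem_image, mem_coe, mem_addRows,
    isAddable_iff, Prod.mk.injEq]
  constructor
  · rintro ⟨rfl, h⟩; exact ⟨i, h, rfl, rfl⟩
  · rintro ⟨i', h, rfl, rfl⟩; exact ⟨rfl, h⟩

lemma removable_set_eq :
    {c | IsRemovable μ c} = ↑((remRows μ).image (fun i => (i, μ.rowLen i - 1))) := by
  ext ⟨i, j⟩
  simp only [Set.mem_setOf_eq, coe_image, Set.mem_image, mem_coe, mem_remRows,
    isRemovable_iff, Prod.mk.injEq]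
  constructor
  · rintro ⟨hj, h⟩; exact ⟨i, h, rfl, by omega⟩
  · rintro ⟨i', h, rfl, rfl⟩
    have : 0 < μ.rowLen i' := by have := h; simp only [remRow] at this; omega
    exact ⟨by omega, h⟩

variable (μ s) in
def numP (q ε : ℝ) : ℝ[X] := ∏ r ∈ AC μ s, (Polynomial.X - Polynomial.C (ε * q ^ r))
variable (μ s) in
def denP (q ε : ℝ) : ℝ[X] := ∏ r ∈ RC μ s, (Polynomial.X - Polynomial.C (ε * q ^ r))

lemma residue_eq (q ε : ℝ) :
    residueFun q ε μ s = algebraMap ℝ[X] (RatFunc ℝ) (numP μ s q ε) /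
      algebraMap ℝ[X] (RatFunc ℝ) (denP μ s q ε) := by
  have hnum : (∏ᶠ c ∈ {c | IsAddable μ c}, (RatFunc.X - RatFunc.C (ε * q ^ (cont s c))))
      = algebraMap ℝ[X] (RatFunc ℝ) (numP μ s q ε) := by
    rw [addable_set_eq, finprod_mem_coe_finset, Finset.prod_image
      (by intro a _ b _ hab; exact congrArg Prod.fst hab)]
    rw [numP, AC, Finset.prod_image (by intro a _ b _ hab; exact β_strictAnti.injective hab)]
    rw [map_prod]
    refine Finset.prod_congr rfl fun i _ => ?_
    have hc : cont s (i, μ.rowLen i) = β μ s i := by simp [cont, β]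
    rw [map_sub, RatFunc.algebraMap_X, RatFunc.algebraMap_C, hc]
  have hden : (∏ᶠ c ∈ {c | IsRemovable μ c}, (RatFunc.X - RatFunc.C (ε * q ^ (cont s c))))
      = algebraMap ℝ[X] (RatFunc ℝ) (denP μ s q ε) := by
    rw [removable_set_eq, finprod_mem_coe_finset, Finset.prod_image
      (by intro a _ b _ hab; exact congrArg Prod.fst hab)]
    have hinj : ∀ x ∈ remRows μ, ∀ y ∈ remRows μ, β μ s x - 1 = β μ s y - 1 → x = y := by
      intro a _ b _ hab
      exact β_strictAnti.injective (show β μ s a = β μ s b by omega)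
    rw [denP, RC, Finset.prod_image hinj, map_prod]
    refine Finset.prod_congr rfl fun i hi => ?_
    rw [map_sub, RatFunc.algebraMap_X, RatFunc.algebraMap_C]
    have h1 : 0 < μ.rowLen i := by
      have := mem_remRows.1 hi; simp only [remRow] at this; omega
    have hc : cont s (i, μ.rowLen i - 1) = β μ s i - 1 := by
      simp only [cont, β]; push_cast [h1]; ring
    rw [hc]
  rw [residueFun, hnum, hden]

variable {q ε : ℝ}

lemma g_inj (hq : 1 < q) (hε : ε = 1 ∨ ε = -1) :
    Function.Injective (fun r : ℤ => ε * q ^ r) := by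
  intro a b hab
  have hε0 : ε ≠ 0 := by rcases hε with rfl | rfl <;> norm_num
  have h1 : q ^ a = q ^ b := mul_left_cancel₀ hε0 hab
  exact zpow_right_injective₀ (by linarith) (ne_of_gt hq) h1

lemma numP_monic : (numP μ s q ε).Monic :=
  Polynomial.monic_prod_of_monic _ _ fun r _ => Polynomial.monic_X_sub_C _

lemma denP_monic : (denP μ s q ε).Monic :=
  Polynomial.monic_prod_of_monic _ _ fun r _ => Polynomial.monic_X_sub_C _

lemma AC_ne_RC : ∀ a ∈ AC μ s, ∀ r ∈ RC μ s, a ≠ r := by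
  intro a ha r hr
  simp only [AC, RC, Finset.mem_image] at ha hr
  obtain ⟨i, hi, rfl⟩ := ha
  obtain ⟨i', hi', rfl⟩ := hr
  have hadd : addRow μ i := mem_addRows.1 hi
  have hrem : remRow μ i' := mem_remRows.1 hi'
  simp only [addRow] at hadd
  simp only [remRow] at hrem
  simp only [β]
  intro heq
  have heq' : (μ.rowLen i : ℤ) - i = (μ.rowLen i' : ℤ) - 1 - i' := by omega
  rcases Nat.lt_trichotomy i i' with hlt | rfl | hgt
  · have := μ.rowLen_anti i i' (by omega)
    omega
  · omega
  · have h2 : μ.rowLen i ≤ μ.rowLen i' := μ.rowLen_anti i' i (by omega)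
    have h3 : i = i' + 1 := by omega
    subst h3
    omega

lemma coprime_num_den (hq : 1 < q) (hε : ε = 1 ∨ ε = -1) :
    IsCoprime (numP μ s q ε) (denP μ s q ε) := by
  apply IsCoprime.prod_left
  intro a ha
  apply IsCoprime.prod_right
  intro r hr
  exact Polynomial.isCoprime_X_sub_C_of_isUnit_sub
    (sub_ne_zero.2 fun hh => AC_ne_RC a ha r hr (g_inj hq hε hh)).isUnit

variable {μ' : YoungDiagram} {s' : ℤ}

lemma AC_RC_eq (hq : 1 < q) (hε : ε = 1 ∨ ε = -1)
    (h : residueFun q ε μ s = residueFun q ε μ' s') :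
    AC μ s = AC μ' s' ∧ RC μ s = RC μ' s' := by
  rw [residue_eq, residue_eq] at h
  have hD : denP μ s q ε ≠ 0 := (denP_monic).ne_zero
  have hD' : denP μ' s' q ε ≠ 0 := (denP_monic).ne_zero
  rw [div_eq_div_iff (RatFunc.algebraMap_ne_zero hD) (RatFunc.algebraMap_ne_zero hD'),
    ← map_mul, ← map_mul] at h
  have h2 : numP μ s q ε * denP μ' s' q ε = numP μ' s' q ε * denP μ s q ε :=
    RatFunc.algebraMap_injective ℝ h
  have hdd' : denP μ s q ε ∣ denP μ' s' q ε := by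
    refine (coprime_num_den hq hε).symm.dvd_of_dvd_mul_left ?_
    exact ⟨numP μ' s' q ε, by rw [h2, mul_comm]⟩
  have hd'd : denP μ' s' q ε ∣ denP μ s q ε := by
    refine (coprime_num_den hq hε).symm.dvd_of_dvd_mul_left ?_
    exact ⟨numP μ s q ε, by rw [← h2, mul_comm]⟩
  have hDeq : denP μ s q ε = denP μ' s' q ε :=
    Polynomial.eq_of_monic_of_associated denP_monic denP_monic
      (associated_of_dvd_dvd hdd' hd'd)
  have hNeq : numP μ s q ε = numP μ' s' q ε := by
    rw [hDeq] at h2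
    exact mul_right_cancel₀ hD' h2
  constructor
  · have e1 : (AC μ s).image (fun r : ℤ => ε * q ^ r) =
        (AC μ' s').image (fun r : ℤ => ε * q ^ r) := by
      apply Finset.val_injective
      have r1 := Polynomial.roots_prod_X_sub_C ((AC μ s).image (fun r : ℤ => ε * q ^ r))
      have r2 := Polynomial.roots_prod_X_sub_C ((AC μ' s').image (fun r : ℤ => ε * q ^ r))
      rw [← r1, ← r2]
      rw [Finset.prod_image (fun a _ b _ hab => g_inj hq hε hab),
        Finset.prod_image (fun a _ b _ hab => g_inj hq hε hab)]
      rw [← numP, ← numP, hNeq]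
    exact Finset.image_injective (g_inj hq hε) e1
  · have e1 : (RC μ s).image (fun r : ℤ => ε * q ^ r) =
        (RC μ' s').image (fun r : ℤ => ε * q ^ r) := by
      apply Finset.val_injective
      have r1 := Polynomial.roots_prod_X_sub_C ((RC μ s).image (fun r : ℤ => ε * q ^ r))
      have r2 := Polynomial.roots_prod_X_sub_C ((RC μ' s').image (fun r : ℤ => ε * q ^ r))
      rw [← r1, ← r2]
      rw [Finset.prod_image (fun a _ b _ hab => g_inj hq hε hab),
        Finset.prod_image (fun a _ b _ hab => g_inj hq hε hab)]
      rw [← denP, ← denP, hDeq]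
    exact Finset.image_injective (g_inj hq hε) e1

lemma addRow_lt {i : ℕ} (h : addRow μ i) : i < μ.colLen 0 + 1 :=
  Finset.mem_range.1 (Finset.mem_filter.1 (mem_addRows.2 h)).1

lemma remRow_lt {i : ℕ} (h : remRow μ i) : i < μ.colLen 0 + 1 :=
  Finset.mem_range.1 (Finset.mem_filter.1 (mem_remRows.2 h)).1

lemma filter_range_ext {p : ℕ → Prop} {M M' : ℕ} (h : M ≤ M') (hb : ∀ i, p i → i < M) :
    (Finset.range M).filter p = (Finset.range M').filter p := by
  ext i
  simp only [Finset.mem_filter, Finset.mem_range]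
  constructor
  · rintro ⟨h1, h2⟩; exact ⟨by omega, h2⟩
  · rintro ⟨h1, h2⟩; exact ⟨hb i h2, h2⟩

variable (μ s) in
def Pf (x : ℤ) (i : ℕ) : ℤ := if x ≤ β μ s i then 1 else 0
variable (μ s) in
def Qf (x : ℤ) (i : ℕ) : ℤ := if x ≤ β μ s i - 1 then 1 else 0
variable (μ s) in
def Ef (x : ℤ) (i : ℕ) : ℤ := if x = β μ s i then 1 else 0
variable (μ s) in
def Af (x : ℤ) (i : ℕ) : ℤ := if addRow μ i ∧ x ≤ β μ s i then 1 else 0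
variable (μ s) in
def Rf (x : ℤ) (i : ℕ) : ℤ := if remRow μ i ∧ x ≤ β μ s i - 1 then 1 else 0

lemma Pf_eq (x : ℤ) (i : ℕ) : Pf μ s x i = Ef μ s x i + Qf μ s x i := by
  simp only [Pf, Qf, Ef]
  split_ifs <;> omega

lemma key_telescope (x : ℤ) (i : ℕ) :
    Af μ s x (i+1) = Rf μ s x i + (Ef μ s x (i+1) + (Qf μ s x (i+1) - Qf μ s x i)) := by
  have hkey : Af μ s x (i+1) - Rf μ s x i = Pf μ s x (i+1) - Qf μ s x i := by
    rcases lt_or_eq_of_le (μ.rowLen_anti i (i+1) (by omega)) with hlt | heq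
    · have ha : addRow μ (i+1) := Or.inr (by simpa using hlt)
      have hr : remRow μ i := hlt
      simp [Af, Rf, Pf, Qf, ha, hr]
    · have hβ : β μ s (i+1) = β μ s i - 1 := by
        simp only [β, ← heq]; push_cast; ring
      have ha : ¬ addRow μ (i+1) := by
        simp only [addRow, Nat.add_sub_cancel]
        omega
      have hr : ¬ remRow μ i := by simp only [remRow]; omega
      simp [Af, Rf, Pf, Qf, ha, hr, hβ]
  have hpq := Pf_eq (μ := μ) (s := s) x (i+1)
  omega

set_option maxHeartbeats 1000000 in
variable (μ s) in
lemma counting (x : ℤ) :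
    (((AC μ s).filter (fun a => x ≤ a)).card : ℤ)
      = (((RC μ s).filter (fun r => x ≤ r)).card : ℤ)
        + (if x ∈ Set.range (β μ s) then 1 else 0) := by
  obtain ⟨N, hN1, hβN⟩ : ∃ N : ℕ, μ.colLen 0 + 1 ≤ N ∧ β μ s N < x := by
    refine ⟨μ.colLen 0 + 1 + (s + 1 - x).toNat, by omega, ?_⟩
    have h0 : μ.rowLen (μ.colLen 0 + 1 + (s + 1 - x).toNat) = 0 := rowLen_zero (by omega)
    simp only [β, h0, Nat.cast_zero]
    omega
  have hA : (((AC μ s).filter (fun a => x ≤ a)).card : ℤ)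
      = ∑ i ∈ Finset.range (N+1), Af μ s x i := by
    rw [AC, Finset.filter_image, Finset.card_image_of_injective _ β_strictAnti.injective,
      addRows, Finset.filter_filter]
    simp only [Af]
    rw [Finset.sum_boole]
    norm_cast
    congr 1
    ext i
    simp only [Finset.mem_filter, Finset.mem_range]
    constructor
    · rintro ⟨h1, h2⟩; exact ⟨by omega, h2⟩
    · rintro ⟨h1, h2⟩; exact ⟨addRow_lt h2.1, h2⟩
  have hR : (((RC μ s).filter (fun r => x ≤ r)).card : ℤ)
      = ∑ i ∈ Finset.range N, Rf μ s x i := by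
    rw [RC, Finset.filter_image, Finset.card_image_of_injective _
      (fun a b hab => β_strictAnti.injective (show β μ s a = β μ s b by omega)),
      remRows, Finset.filter_filter]
    simp only [Rf]
    rw [Finset.sum_boole]
    norm_cast
    congr 1
    ext i
    simp only [Finset.mem_filter, Finset.mem_range]
    constructor
    · rintro ⟨h1, h2⟩; exact ⟨by omega, h2⟩
    · rintro ⟨h1, h2⟩; exact ⟨remRow_lt h2.1, h2⟩
  have hsum : ∑ i ∈ Finset.range (N+1), Af μ s x i
      = (∑ i ∈ Finset.range N, Rf μ s x i) + ∑ i ∈ Finset.range (N+1), Ef μ s x i := by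
    rw [Finset.sum_range_succ' (Af μ s x) N, Finset.sum_range_succ' (Ef μ s x) N]
    rw [Finset.sum_congr rfl (fun i _ => key_telescope (μ := μ) (s := s) x i)]
    rw [Finset.sum_add_distrib, Finset.sum_add_distrib, Finset.sum_range_sub (Qf μ s x) N]
    have hA0 : Af μ s x 0 = Ef μ s x 0 + Qf μ s x 0 := by
      have h1 : addRow μ 0 := Or.inl rfl
      have := Pf_eq (μ := μ) (s := s) x 0
      simp only [Af, Pf, h1, true_and] at *
      omega
    have hQN : Qf μ s x N = 0 := by
      have hne : ¬ x ≤ β μ s N - 1 := by omega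
      simp only [Qf, if_neg hne]
    omega
  have hE : ∑ i ∈ Finset.range (N+1), Ef μ s x i
      = (if x ∈ Set.range (β μ s) then 1 else 0) := by
    by_cases hx : x ∈ Set.range (β μ s)
    · obtain ⟨i, hi⟩ := hx
      have hiN : i < N + 1 := by
        by_contra hge
        have hle : β μ s i ≤ β μ s N := β_strictAnti.antitone (by omega)
        omega
      have hval : ∀ b, Ef μ s x b = if b = i then 1 else 0 := by
        intro b
        by_cases hb : b = i
        · subst hb
          have hx2 : x = β μ s b := hi.symm
          simp [Ef, hx2]
        · have hne : x ≠ β μ s b := fun hc =>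
            hb (β_strictAnti.injective (hc.symm.trans hi.symm))
          simp [Ef, hne, hb]
      rw [if_pos ⟨i, hi⟩, Finset.sum_congr rfl (fun b _ => hval b),
        Finset.sum_ite_eq' (Finset.range (N+1)) i (fun _ => (1:ℤ)),
        if_pos (Finset.mem_range.2 hiN)]
    · rw [if_neg hx]
      refine Finset.sum_eq_zero fun i _ => ?_
      simp only [Ef, ite_eq_right_iff]
      intro heq
      exact absurd ⟨i, heq.symm⟩ hx
  rw [hA, hR, hsum, hE]

lemma range_eq (hAC : AC μ s = AC μ' s') (hRC : RC μ s = RC μ' s') :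
    Set.range (β μ s) = Set.range (β μ' s') := by
  ext x
  have h1 := counting μ s x
  have h2 := counting μ' s' x
  rw [hAC, hRC] at h1
  constructor
  · intro hx
    by_contra hx'
    rw [if_pos hx] at h1
    rw [if_neg hx'] at h2
    omega
  · intro hx
    by_contra hx'
    rw [if_neg hx'] at h1
    rw [if_pos hx] at h2
    omega

lemma mem_SF {x : ℤ} {i : ℕ} :
    x ∈ (Finset.range i).image (β μ s) ↔ x ∈ Set.range (β μ s) ∧ β μ s i < x := by
  simp only [Finset.mem_image, Finset.mem_range]
  constructor
  · rintro ⟨j, hj, rfl⟩; exact ⟨⟨j, rfl⟩, β_strictAnti hj⟩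
  · rintro ⟨⟨j, rfl⟩, hlt⟩; exact ⟨j, β_strictAnti.lt_iff_gt.1 hlt, rfl⟩

lemma β_not_lt (hr : Set.range (β μ s) = Set.range (β μ' s')) (i : ℕ) :
    ¬ β μ s i < β μ' s' i := by
  intro hlt
  have hsub : insert (β μ' s' i) ((Finset.range i).image (β μ' s'))
      ⊆ (Finset.range i).image (β μ s) := by
    intro x hx
    rcases Finset.mem_insert.1 hx with rfl | hx
    · exact mem_SF.2 ⟨by rw [hr]; exact Set.mem_range_self i, hlt⟩
    · obtain ⟨hx1, hx2⟩ := mem_SF.1 hx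
      exact mem_SF.2 ⟨by rw [hr]; exact hx1, lt_trans hlt hx2⟩
  have h1 : (insert (β μ' s' i) ((Finset.range i).image (β μ' s'))).card = i + 1 := by
    rw [Finset.card_insert_of_notMem (fun hmem => absurd (mem_SF.1 hmem).2 (lt_irrefl _)),
      Finset.card_image_of_injective _ β_strictAnti.injective, Finset.card_range]
  have h2 : ((Finset.range i).image (β μ s)).card = i := by
    rw [Finset.card_image_of_injective _ β_strictAnti.injective, Finset.card_range]
  have := Finset.card_le_card hsub
  omega

lemma β_congr (hr : Set.range (β μ s) = Set.range (β μ' s')) (i : ℕ) :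
    β μ s i = β μ' s' i :=
  le_antisymm (not_lt.1 (β_not_lt hr.symm i)) (not_lt.1 (β_not_lt hr i))

lemma charged_eq (hr : Set.range (β μ s) = Set.range (β μ' s')) : μ = μ' ∧ s = s' := by
  have hβ := β_congr (μ := μ) (s := s) (μ' := μ') (s' := s') hr
  have h0 : μ.rowLen (max (μ.colLen 0) (μ'.colLen 0)) = 0 := rowLen_zero (le_max_left _ _)
  have h0' : μ'.rowLen (max (μ.colLen 0) (μ'.colLen 0)) = 0 := rowLen_zero (le_max_right _ _)
  have hs : s = s' := by
    have := hβ (max (μ.colLen 0) (μ'.colLen 0))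
    simp only [β, h0, h0', Nat.cast_zero] at this
    omega
  subst hs
  refine ⟨?_, rfl⟩
  have hL : ∀ i, μ.rowLen i = μ'.rowLen i := by
    intro i
    have := hβ i
    simp only [β] at this
    omega
  ext ⟨i, j⟩
  rw [YoungDiagram.mem_cells, YoungDiagram.mem_cells, YoungDiagram.mem_iff_lt_rowLen,
    YoungDiagram.mem_iff_lt_rowLen, hL]

end Aux

/-- The `(q,ε)`-residue function is injective on charged partitions. -/
theorem residueFun_injective (q ε : ℝ) (hq : 1 < q) (hε : ε = 1 ∨ ε = -1)
    (μ μ' : YoungDiagram) (s s' : ℤ)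
    (h : residueFun q ε μ s = residueFun q ε μ' s') : μ = μ' ∧ s = s' := by
  obtain ⟨hAC, hRC⟩ := Aux.AC_RC_eq hq hε h
  exact Aux.charged_eq (Aux.range_eq hAC hRC)

end
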